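/- Let p_1, …, p_m in [0,1], nonnegative reals R̂_1, …, R̂_m, and q in (0,1). If λ, η in [0,1]^m satisfy λ_j ≤ η_j for all j in [m], then r*(η) ≤ r*(λ) and S(η) ⊆ S(λ). In particular, the deterministic pruning set S(1, …, 1) is contained in both the heterogeneous pruning set S(ξ_1, …, ξ_m) for any ξ_1, …, ξ_m in [0,1] and the homogeneous pruning set S(ξ, …, ξ) for any ξ in [0,1]. -/
import Mathlib


/-- The pruning threshold `r*(λ) = max{r ∈ {0,…,m} : #{j : p_j ≤ q·R̂_j/m and λ_j·R̂_j ≤ r} ≥ r}`. -/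
noncomputable def prunedThreshold (m : ℕ) (q : ℝ) (p R lam : Fin m → ℝ) : ℕ :=
  Nat.findGreatest
    (fun r => r ≤ Set.ncard {j : Fin m | p j ≤ q * R j / m ∧ lam j * R j ≤ (r : ℝ)}) m

/-- The pruned selection set `S(λ) = {j : p_j ≤ q·R̂_j/m and λ_j·R̂_j ≤ r*(λ)}`. -/
noncomputable def prunedSet (m : ℕ) (q : ℝ) (p R lam : Fin m → ℝ) : Set (Fin m) :=
  {j : Fin m | p j ≤ q * R j / m ∧ lam j * R j ≤ (prunedThreshold m q p R lam : ℝ)}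

/-- The BH index `r*_BH = max{r ∈ {0,…,m} : #{j : p_j ≤ q·r/m} ≥ r}`. -/
noncomputable def bhThreshold (m : ℕ) (q : ℝ) (p : Fin m → ℝ) : ℕ :=
  Nat.findGreatest (fun r => r ≤ Set.ncard {j : Fin m | p j ≤ q * (r : ℝ) / m}) m

/-- The BH selection set `S_BH = {j : p_j ≤ q·r*_BH/m}`. -/
noncomputable def bhSet (m : ℕ) (q : ℝ) (p : Fin m → ℝ) : Set (Fin m) :=
  {j : Fin m | p j ≤ q * (bhThreshold m q p : ℝ) / m}

/-- If λ ≤ η coordinatewise (both in [0,1]^m), then r*(η) ≤ r*(λ) and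
S(η) ⊆ S(λ).  In particular, the deterministic pruning set S(1,…,1) is contained in the
heterogeneous pruning set S(ξ₁,…,ξ_m) for any ξ₁,…,ξ_m ∈ [0,1] and in the homogeneous pruning
set S(ξ,…,ξ) for any ξ ∈ [0,1]. -/
theorem optcs_pruned_antitone
    (m : ℕ) (q : ℝ) (hq : q ∈ Set.Ioo (0 : ℝ) 1)
    (p : Fin m → ℝ) (hp : ∀ j, p j ∈ Set.Icc (0 : ℝ) 1)
    (R : Fin m → ℝ) (hR : ∀ j, 0 ≤ R j) :
    (∀ lam eta : Fin m → ℝ, (∀ j, lam j ∈ Set.Icc (0 : ℝ) 1) →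
        (∀ j, eta j ∈ Set.Icc (0 : ℝ) 1) → (∀ j, lam j ≤ eta j) →
        prunedThreshold m q p R eta ≤ prunedThreshold m q p R lam ∧
          prunedSet m q p R eta ⊆ prunedSet m q p R lam) ∧
    (∀ xi : Fin m → ℝ, (∀ j, xi j ∈ Set.Icc (0 : ℝ) 1) →
        prunedSet m q p R (fun _ => 1) ⊆ prunedSet m q p R xi) ∧
    (∀ xi : ℝ, xi ∈ Set.Icc (0 : ℝ) 1 →
        prunedSet m q p R (fun _ => 1) ⊆ prunedSet m q p R (fun _ => xi)) := by
  have key : ∀ lam eta : Fin m → ℝ, (∀ j, lam j ≤ eta j) →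
      prunedThreshold m q p R eta ≤ prunedThreshold m q p R lam ∧
        prunedSet m q p R eta ⊆ prunedSet m q p R lam := by
    intro lam eta hle
    have hmul : ∀ j, lam j * R j ≤ eta j * R j := fun j =>
      mul_le_mul_of_nonneg_right (hle j) (hR j)
    have hthr : prunedThreshold m q p R eta ≤ prunedThreshold m q p R lam := by
      apply Nat.findGreatest_mono
      case hPQ =>
        intro r hr
        refine hr.trans (Set.ncard_le_ncard ?_ (Set.toFinite _))
        intro j hj
        exact ⟨hj.1, (hmul j).trans hj.2⟩
      case hmn => exact le_rfl
    refine ⟨hthr, ?_⟩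
    intro j hj
    exact ⟨hj.1, (hmul j).trans (hj.2.trans (by exact_mod_cast hthr))⟩
  refine ⟨fun lam eta _ _ hle => key lam eta hle, ?_, ?_⟩
  · intro xi hxi
    exact (key xi (fun _ => 1) (fun j => (hxi j).2)).2
  · intro xi hxi
    exact (key (fun _ => xi) (fun _ => 1) (fun _ => hxi.2)).2
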